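/- Let Q be a finite linearly ordered set, and let g be a function from subsets of Q to {0,1} with g(∅) = 1. Then for every subset T ⊆ Q: 1_{T=∅} = g*(T) + ∑_S (−1)^{|S|} (g(S ∖ {min S}) − g(S)), where the sum ranges over all nonempty subsets S ⊆ T such that every q ∈ Q with q < min(S) satisfies q ∉ T. -/
import Mathlib


open Finset in
theorem lem_whithe (Q : Type*) [Fintype Q] [LinearOrder Q]
    (g : Finset Q → ℤ) (hg01 : ∀ S : Finset Q, g S = 0 ∨ g S = 1) (hgempty : g ∅ = 1)
    (T : Finset Q) :
    (if T = ∅ then (1 : ℤ) else 0) =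
      (∑ U ∈ T.powerset, (-1 : ℤ) ^ U.card * g U) +
        ∑ S ∈ T.powerset.filter
            (fun S => S ≠ ∅ ∧ ∀ q : Q, (q : WithTop Q) < S.min → q ∉ T),
          (-1 : ℤ) ^ S.card *
            (g (S.filter fun q => (q : WithTop Q) ≠ S.min) - g S) := by
  by_cases hT : T = ∅
  · subst hT; simp [hgempty, Finset.filter_singleton]
  · simp only [if_neg hT]
    have hne : T.Nonempty := Finset.nonempty_iff_ne_empty.mpr hT
    set m := T.min' hne with hm
    have hmT : m ∈ T := T.min'_mem hne
    have hmE : m ∉ T.erase m := Finset.notMem_erase _ _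
    have hTins : T = insert m (T.erase m) := (Finset.insert_erase hmT).symm
    -- min of insert m U is m, for U ⊆ T.erase m
    have hminins : ∀ U : Finset Q, U ⊆ T.erase m → (insert m U).min = (m : WithTop Q) := by
      intro U hU
      apply le_antisymm
      · exact Finset.min_le (Finset.mem_insert_self m U)
      · apply Finset.le_min
        intro b hb
        rcases Finset.mem_insert.mp hb with rfl | hbU
        · exact le_refl _
        · exact_mod_cast T.min'_le b ((Finset.erase_subset m T) (hU hbU))
    have hmnotU : ∀ U : Finset Q, U ⊆ T.erase m → m ∉ U := fun U hU h =>
      hmE (hU h)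
    -- characterize the filter set
    have hfilter : T.powerset.filter
        (fun S => S ≠ ∅ ∧ ∀ q : Q, (q : WithTop Q) < S.min → q ∉ T)
        = (T.erase m).powerset.image (insert m) := by
      ext S
      simp only [mem_filter, mem_powerset, mem_image]
      constructor
      · rintro ⟨hS, hSne, hq⟩
        have hSne' : S.Nonempty := nonempty_iff_ne_empty.mpr hSne
        have hmS : m ∈ S := by
          by_contra hmS
          have h1 : m ≤ S.min' hSne' := T.min'_le _ (hS (S.min'_mem hSne'))
          have h2 : m < S.min' hSne' := lt_of_le_of_ne h1 (by
            intro h; exact hmS (h ▸ S.min'_mem hSne'))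
          have : (m : WithTop Q) < S.min := by
            rw [← S.coe_min' hSne']
            exact_mod_cast h2
          exact (hq m this) hmT
        refine ⟨S.erase m, ?_, Finset.insert_erase hmS⟩
        intro x hx
        exact Finset.mem_erase.mpr ⟨(Finset.mem_erase.mp hx).1,
          hS ((Finset.erase_subset m S) hx)⟩
      · rintro ⟨U, hU, rfl⟩
        refine ⟨?_, Finset.insert_ne_empty m U, ?_⟩
        · intro x hx
          rcases Finset.mem_insert.mp hx with rfl | hxU
          · exact hmT
          · exact (Finset.erase_subset m T) (hU hxU)
        · intro q hq hqT
          rw [hminins U hU] at hq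
          have hq' : q < m := by exact_mod_cast hq
          exact absurd (T.min'_le q hqT) (not_le.mpr hq')
    rw [hfilter]
    -- filter inside: insert m U filtered = U
    have hfilt2 : ∀ U : Finset Q, U ⊆ T.erase m →
        Finset.filter (fun q : Q => (q : WithTop Q) ≠ (insert m U).min) (insert m U) = U := by
      intro U hU
      rw [hminins U hU]
      ext x
      simp only [mem_filter, mem_insert]
      constructor
      · rintro ⟨rfl | hxU, hne2⟩
        · exact absurd rfl hne2
        · exact hxU
      · intro hxU
        refine ⟨Or.inr hxU, ?_⟩
        intro h
        have : x = m := by exact_mod_cast h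
        exact hmnotU U hU (this ▸ hxU)
    rw [Finset.sum_image (by
      intro U hU V hV hUV
      have hmU := hmnotU U (Finset.mem_powerset.mp hU)
      have hmV := hmnotU V (Finset.mem_powerset.mp hV)
      rw [← Finset.erase_insert hmU, ← Finset.erase_insert hmV, hUV])]
    have h2 : (∑ U ∈ (T.erase m).powerset, (-1:ℤ)^(insert m U).card *
          (g (Finset.filter (fun q : Q => (q : WithTop Q) ≠ (insert m U).min) (insert m U))
            - g (insert m U)))
        = ∑ U ∈ (T.erase m).powerset, (-1:ℤ)^(U.card+1) * (g U - g (insert m U)) :=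
      Finset.sum_congr rfl (fun U hU => by
        rw [hfilt2 U (Finset.mem_powerset.mp hU),
          Finset.card_insert_of_notMem (hmnotU U (Finset.mem_powerset.mp hU))])
    rw [h2]
    have h1 : (∑ U ∈ T.powerset, (-1:ℤ)^U.card * g U)
        = (∑ U ∈ (T.erase m).powerset, (-1:ℤ)^U.card * g U)
          + ∑ U ∈ (T.erase m).powerset, (-1:ℤ)^(U.card+1) * g (insert m U) := by
      conv_lhs => rw [hTins]
      rw [Finset.sum_powerset_insert hmE]
      congr 1
      exact Finset.sum_congr rfl (fun U hU => by
        rw [Finset.card_insert_of_notMem (hmnotU U (Finset.mem_powerset.mp hU))])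
    rw [h1]
    rw [add_assoc, ← Finset.sum_add_distrib, ← Finset.sum_add_distrib]
    exact (Finset.sum_eq_zero (fun U hU => by ring)).symm
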